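/- The map ψ defined by ψ([[a,b],[c,d]]) = [[d², -c²/n, 2cd],[-nb², a², -2nab],[bd, -ac/n, ad+bc]] is a group homomorphism: ψ(AB) = ψ(A)ψ(B) for all 2×2 real matrices A, B of determinant 1. -/

import Mathlib

open Matrix

/-- The map `ψ` from 2×2 real matrices of determinant one to 3×3 real matrices. -/
noncomputable def psiMap (n : ℝ) (A : Matrix (Fin 2) (Fin 2) ℝ) : Matrix (Fin 3) (Fin 3) ℝ :=
  let a := A 0 0; let b := A 0 1; let c := A 1 0; let d := A 1 1
  !![d ^ 2, -c ^ 2 / n, 2 * c * d;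
     -n * b ^ 2, a ^ 2, -2 * n * a * b;
     b * d, -a * c / n, a * d + b * c]

set_option maxHeartbeats 1000000 in
/-- `ψ` is multiplicative: `ψ(AB) = ψ(A)ψ(B)` for 2×2 real matrices of determinant one. -/
theorem psi_mul (n : ℕ) (hn : 1 ≤ n) (A B : Matrix (Fin 2) (Fin 2) ℝ)
    (hA : A.det = 1) (hB : B.det = 1) :
    psiMap (n : ℝ) (A * B) = psiMap (n : ℝ) A * psiMap (n : ℝ) B := by
  have hn0 : (n : ℝ) ≠ 0 := by positivity
  unfold psiMap
  ext i j
  fin_cases i <;> fin_cases j <;>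
    simp only [Matrix.mul_apply, Fin.sum_univ_succ, Fin.sum_univ_zero, Matrix.cons_val_zero,
      Matrix.cons_val_one, Matrix.head_cons, Matrix.cons_val', Matrix.head_fin_const,
      Matrix.empty_val', Matrix.cons_val_fin_one, Fin.isValue, add_zero, Matrix.cons_val_succ, Matrix.of_apply, Fin.reduceFinMk, Fin.succ_zero_eq_one,
        Fin.succ_one_eq_two, Matrix.cons_val_two, Matrix.tail_cons] <;>
    field_simp <;> ring
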